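/- Let k ≥ 3 be an integer. At every point x ∈ [0,1) with x ∉ C_k, the generalized Cantor function g_k is differentiable with derivative 0 (i.e., g_k has derivative 0 at x). -/

import Mathlib

open scoped ENNReal

/-- The `k`-transformation `x ↦ k·x mod 1`. -/
noncomputable def Tmap (k : ℕ) (x : ℝ) : ℝ := Int.fract ((k : ℝ) * x)

/-- The survivor set of the `k`-transformation with hole `(a,b)`. -/
def W (k : ℕ) (a b : ℝ) : Set ℝ :=
  {x | x ∈ Set.Ico (0 : ℝ) 1 ∧ ∀ n : ℕ, (Tmap k)^[n] x ∉ Set.Ioo a b}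

/-- The generalized Cantor set `C_k`. -/
def Ck (k : ℕ) : Set ℝ :=
  {x | ∃ a : ℕ → ℕ, (∀ n, a n = 0 ∨ a n = k - 1) ∧
    x = ∑' n : ℕ, (a n : ℝ) / (k : ℝ) ^ (n + 1)}

/-- The `n`-th `k`-ary digit of `x`. -/
noncomputable def digit (k : ℕ) (n : ℕ) (x : ℝ) : ℤ :=
  ⌊(k : ℝ) ^ (n + 1) * x⌋ % (k : ℤ)

open Classical in
/-- The generalized Cantor function `g_k`. -/
noncomputable def gk (k : ℕ) (x : ℝ) : ℝ :=
  if x = 1 then 1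
  else if ∀ n, digit k n x = 0 ∨ digit k n x = (k : ℤ) - 1 then
    ∑' n : ℕ, (digit k n x : ℝ) / (((k : ℝ) - 1) * 2 ^ (n + 1))
  else
    (∑ n ∈ Finset.range (sInf {n : ℕ | ¬(digit k n x = 0 ∨ digit k n x = (k : ℤ) - 1)}),
      (digit k n x : ℝ) / (((k : ℝ) - 1) * 2 ^ (n + 1))) +
    1 / 2 ^ (sInf {n : ℕ | ¬(digit k n x = 0 ∨ digit k n x = (k : ℤ) - 1)} + 1)

/-- The Thue–Morse sequence: parity of the number of 1s in the binary expansion. -/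
def tm (n : ℕ) : ℕ := (Nat.digits 2 n).sum % 2

/-- `g_k` has derivative `0` at every point of `[0,1) \ C_k`. -/
lemma floor_div_pow (k : ℕ) (hk : 3 ≤ k) (a : ℝ) (j : ℕ) :
    ⌊a / (k:ℝ)^j⌋ = ⌊a⌋ / (k:ℤ)^j := by
  have hk0 : (0:ℝ) < (k:ℝ) := by
    have : 0 < k := by omega
    exact_mod_cast this
  have hK : (0:ℝ) < (k:ℝ)^j := by positivity
  have hKZ : (0:ℤ) < (k:ℤ)^j := by positivity
  set q : ℤ := ⌊a⌋ / (k:ℤ)^j with hq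
  set r : ℤ := ⌊a⌋ % (k:ℤ)^j with hrdef
  have hdm : (k:ℤ)^j * q + r = ⌊a⌋ := Int.mul_ediv_add_emod ⌊a⌋ ((k:ℤ)^j)
  have hr0 : 0 ≤ r := Int.emod_nonneg _ (by positivity)
  have hr1 : r < (k:ℤ)^j := Int.emod_lt_of_pos _ hKZ
  have hfl : (⌊a⌋ : ℝ) ≤ a := Int.floor_le a
  have hfu : a < ⌊a⌋ + 1 := Int.lt_floor_add_one a
  have key : (k:ℝ)^j * (q:ℝ) + (r:ℝ) = (⌊a⌋:ℝ) := by exact_mod_cast congrArg (Int.cast : ℤ → ℝ) hdm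
  have hr0' : (0:ℝ) ≤ (r:ℝ) := by exact_mod_cast hr0
  have hr1' : (r:ℝ) < (k:ℝ)^j := by exact_mod_cast hr1
  rw [Int.floor_eq_iff]
  constructor
  · rw [le_div_iff₀ hK]; linarith
  · have hr1'' : (r:ℝ) + 1 ≤ (k:ℝ)^j := by exact_mod_cast hr1
    rw [div_lt_iff₀ hK]; push_cast; linarith

lemma digit_eq_of_le (k : ℕ) (hk : 3 ≤ k) {n N : ℕ} (h : n ≤ N) (y : ℝ) :
    digit k n y = (⌊(k:ℝ)^(N+1) * y⌋ / (k:ℤ)^(N-n)) % (k:ℤ) := by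
  have hk0 : (0:ℝ) < (k:ℝ) := by
    have : 0 < k := by omega
    exact_mod_cast this
  have hpow : (k:ℝ)^(n+1) * y = ((k:ℝ)^(N+1) * y) / (k:ℝ)^(N-n) := by
    rw [eq_div_iff (by positivity)]
    have h2 : n + 1 + (N - n) = N + 1 := by omega
    calc (k:ℝ)^(n+1) * y * (k:ℝ)^(N-n) = (k:ℝ)^(n+1) * (k:ℝ)^(N-n) * y := by ring
    _ = (k:ℝ)^(N+1) * y := by rw [← pow_add, h2]
  rw [digit, hpow, floor_div_pow k hk]

lemma digit_sub (k : ℕ) (hk : 3 ≤ k) (n : ℕ) (x : ℝ) :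
    (digit k n x : ℝ) = ⌊(k:ℝ)^(n+1) * x⌋ - (k:ℝ) * ⌊(k:ℝ)^n * x⌋ := by
  have hk0 : (0:ℝ) < (k:ℝ) := by
    have : 0 < k := by omega
    exact_mod_cast this
  have h1 : ⌊(k:ℝ)^n * x⌋ = ⌊(k:ℝ)^(n+1) * x⌋ / (k:ℤ) := by
    have : (k:ℝ)^n * x = ((k:ℝ)^(n+1) * x) / (k:ℝ)^1 := by
      rw [eq_div_iff (by positivity)]; ring
    rw [this, floor_div_pow k hk, pow_one]
  rw [digit, Int.emod_def, h1]
  push_cast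
  ring

lemma sum_digits (k : ℕ) (hk : 3 ≤ k) (x : ℝ) (m : ℕ) :
    ∑ n ∈ Finset.range m, (digit k n x : ℝ) / (k:ℝ)^(n+1)
      = (⌊(k:ℝ)^m * x⌋ : ℝ) / (k:ℝ)^m - (⌊x⌋ : ℝ) := by
  have hk0 : (0:ℝ) < (k:ℝ) := by
    have : 0 < k := by omega
    exact_mod_cast this
  have h1 : ∑ n ∈ Finset.range m, (digit k n x : ℝ) / (k:ℝ)^(n+1)
      = ∑ n ∈ Finset.range m, ((⌊(k:ℝ)^(n+1) * x⌋ : ℝ) / (k:ℝ)^(n+1) - (⌊(k:ℝ)^n * x⌋ : ℝ) / (k:ℝ)^n) := by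
    refine Finset.sum_congr rfl (fun n _ => ?_)
    rw [digit_sub k hk]
    field_simp
    ring
  rw [h1, Finset.sum_range_sub (fun i => (⌊(k:ℝ)^i * x⌋ : ℝ) / (k:ℝ)^i) m]
  simp

lemma digit_nonneg (k : ℕ) (hk : 3 ≤ k) (n : ℕ) (x : ℝ) : 0 ≤ digit k n x :=
  Int.emod_nonneg _ (by positivity)

lemma digit_lt (k : ℕ) (hk : 3 ≤ k) (n : ℕ) (x : ℝ) : digit k n x < (k:ℤ) :=
  Int.emod_lt_of_pos _ (by positivity)

lemma hasSum_digits (k : ℕ) (hk : 3 ≤ k) (x : ℝ) (hx : x ∈ Set.Ico (0:ℝ) 1) :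
    HasSum (fun n => (digit k n x : ℝ) / (k:ℝ)^(n+1)) x := by
  have hk0 : (0:ℝ) < (k:ℝ) := by
    have : 0 < k := by omega
    exact_mod_cast this
  have hk1 : (1:ℝ) < (k:ℝ) := by
    have : 1 < k := by omega
    exact_mod_cast this
  have hfx : ⌊x⌋ = 0 := Int.floor_eq_zero_iff.mpr (by exact hx)
  rw [hasSum_iff_tendsto_nat_of_nonneg]
  · have heq : ∀ m : ℕ, ∑ n ∈ Finset.range m, (digit k n x : ℝ) / (k:ℝ)^(n+1)
        = (⌊(k:ℝ)^m * x⌋ : ℝ) / (k:ℝ)^m := by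
      intro m; rw [sum_digits k hk, hfx]; simp
    simp only [heq]
    have hub : ∀ m : ℕ, (⌊(k:ℝ)^m * x⌋ : ℝ) / (k:ℝ)^m ≤ x := by
      intro m
      rw [div_le_iff₀ (by positivity)]
      have := Int.floor_le ((k:ℝ)^m * x)
      linarith [this]
    have hlb : ∀ m : ℕ, x - (1/(k:ℝ))^m ≤ (⌊(k:ℝ)^m * x⌋ : ℝ) / (k:ℝ)^m := by
      intro m
      rw [le_div_iff₀ (by positivity : (0:ℝ) < (k:ℝ)^m)]
      have h2 : (k:ℝ)^m * x - 1 ≤ ⌊(k:ℝ)^m * x⌋ := by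
        have := Int.lt_floor_add_one ((k:ℝ)^m * x); linarith
      have h3 : (x - (1/(k:ℝ))^m) * (k:ℝ)^m = x * (k:ℝ)^m - 1 := by
        rw [sub_mul, ← mul_pow]
        field_simp
        simp
      rw [h3]; linarith
    have hl : Filter.Tendsto (fun m : ℕ => x - (1/(k:ℝ))^m) Filter.atTop (nhds x) := by
      have h0 : Filter.Tendsto (fun m : ℕ => (1/(k:ℝ))^m) Filter.atTop (nhds 0) := by
        apply tendsto_pow_atTop_nhds_zero_of_lt_one (by positivity)
        rw [div_lt_one hk0]; linarith
      simpa using (tendsto_const_nhds (x := x)).sub h0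
    exact tendsto_of_tendsto_of_tendsto_of_le_of_le hl tendsto_const_nhds hlb hub
  · intro n
    have := digit_nonneg k hk n x
    positivity

lemma hasSum_tail (k : ℕ) (hk : 3 ≤ k) (N : ℕ) :
    HasSum (fun n : ℕ => if N < n then ((k:ℝ)-1)/(k:ℝ)^(n+1) else 0) (1/(k:ℝ)^(N+1)) := by
  have hk0 : (0:ℝ) < (k:ℝ) := by
    have : 0 < k := by omega
    exact_mod_cast this
  have hk1 : (1:ℝ) < (k:ℝ) := by
    have : 1 < k := by omega
    exact_mod_cast this
  set f : ℕ → ℝ := fun n => if N < n then ((k:ℝ)-1)/(k:ℝ)^(n+1) else 0 with hf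
  set c : ℝ := ((k:ℝ)-1)/(k:ℝ)^(N+2) with hc
  have hgeo : HasSum (fun n : ℕ => c * (1/(k:ℝ))^n) (c * (1 - 1/(k:ℝ))⁻¹) :=
    (hasSum_geometric_of_lt_one (by positivity) (by rw [div_lt_one hk0]; linarith)).mul_left c
  have heq : (fun n : ℕ => c * (1/(k:ℝ))^n) = (fun n : ℕ => f (n + (N+1))) := by
    funext n
    rw [hf]
    simp only []
    rw [if_pos (by omega : N < n + (N+1))]
    rw [hc, div_pow, one_pow]
    have hpe : n + (N + 1) + 1 = (N+2) + n := by omega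
    rw [hpe, pow_add]
    field_simp
    ring
  rw [heq] at hgeo
  have h2 := (hasSum_nat_add_iff (N+1)).mp hgeo
  have hz : ∑ i ∈ Finset.range (N+1), f i = 0 := by
    refine Finset.sum_eq_zero (fun i hi => ?_)
    rw [hf]
    simp only []
    rw [if_neg]
    simp at hi
    omega
  rw [hz, add_zero] at h2
  suffices hh : 1/(k:ℝ)^(N+1) = c * (1 - 1/(k:ℝ))⁻¹ by rw [hh]; exact h2
  rw [hc]
  have h3 : (1 - 1/(k:ℝ)) = ((k:ℝ)-1)/(k:ℝ) := by field_simp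
  rw [h3, inv_div]
  have hne : ((k:ℝ)-1) ≠ 0 := by linarith
  have hp : (k:ℝ)^(N+2) = (k:ℝ)^(N+1) * k := by rw [pow_succ]
  rw [hp]
  field_simp

lemma gk_eval (k : ℕ) (x : ℝ) (N : ℕ) (hx1 : x ≠ 1)
    (hgood : ∀ n < N, digit k n x = 0 ∨ digit k n x = (k:ℤ)-1)
    (hbad : ¬(digit k N x = 0 ∨ digit k N x = (k:ℤ)-1)) :
    gk k x = (∑ n ∈ Finset.range N, (digit k n x : ℝ) / (((k:ℝ)-1) * 2^(n+1))) + 1/2^(N+1) := by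
  have hne : N ∈ {n : ℕ | ¬(digit k n x = 0 ∨ digit k n x = (k:ℤ)-1)} := hbad
  have hinf : sInf {n : ℕ | ¬(digit k n x = 0 ∨ digit k n x = (k:ℤ)-1)} = N := by
    refine le_antisymm (Nat.sInf_le hne) ?_
    by_contra h
    rw [not_le] at h
    exact (Nat.sInf_mem ⟨N, hne⟩) (hgood _ h)
  have hnall : ¬(∀ n, digit k n x = 0 ∨ digit k n x = (k:ℤ)-1) := fun h => hbad (h N)
  rw [gk, if_neg hx1, if_neg hnall, hinf]

lemma ediv_pred (m K : ℤ) (hK : 0 < K) (h : m % K ≠ 0) : (m - 1) / K = m / K := by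
  have h1 := Int.mul_ediv_add_emod m K
  have hr0 : 0 ≤ m % K := Int.emod_nonneg _ (ne_of_gt hK)
  have hr1 : m % K < K := Int.emod_lt_of_pos _ hK
  have h2 : m - 1 = (m % K - 1) + K * (m / K) := by omega
  rw [h2, Int.add_mul_ediv_left _ _ (ne_of_gt hK)]
  have h3 : (m % K - 1) / K = 0 := Int.ediv_eq_zero_of_lt (by omega) (by omega)
  omega

lemma emod_pred (m K : ℤ) (hK : 0 < K) (h : m % K ≠ 0) : (m - 1) % K = m % K - 1 := by
  have h1 := Int.mul_ediv_add_emod m K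
  have hr0 : 0 ≤ m % K := Int.emod_nonneg _ (ne_of_gt hK)
  have hr1 : m % K < K := Int.emod_lt_of_pos _ hK
  have h2 : m - 1 = (m % K - 1) + K * (m / K) := by omega
  rw [h2, Int.add_mul_emod_self_left]
  exact Int.emod_eq_of_lt (by omega) (by omega)

lemma mem_Ck_all_good (k : ℕ) (hk : 3 ≤ k) (x : ℝ) (hx : x ∈ Set.Ico (0:ℝ) 1)
    (h : ∀ n, digit k n x = 0 ∨ digit k n x = (k:ℤ)-1) : x ∈ Ck k := by
  refine ⟨fun n => (digit k n x).toNat, fun n => ?_, ?_⟩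
  · rcases h n with h'|h'
    · left; show (digit k n x).toNat = 0; omega
    · right; show (digit k n x).toNat = k - 1; omega
  · have heq : ∀ n, ((digit k n x).toNat : ℝ) = (digit k n x : ℝ) := fun n => by
      exact_mod_cast congrArg (Int.cast : ℤ → ℝ) (Int.toNat_of_nonneg (digit_nonneg k hk n x))
    calc x = ∑' n, (digit k n x : ℝ)/(k:ℝ)^(n+1) := (hasSum_digits k hk x hx).tsum_eq.symm
    _ = ∑' n, ((digit k n x).toNat : ℝ)/(k:ℝ)^(n+1) := tsum_congr (fun n => by rw [heq n])

lemma mem_Ck_terminating (k : ℕ) (hk : 3 ≤ k) (x : ℝ) (hx : x ∈ Set.Ico (0:ℝ) 1) (N : ℕ)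
    (hgood : ∀ n < N, digit k n x = 0 ∨ digit k n x = (k:ℤ)-1)
    (hm : ((⌊(k:ℝ)^(N+1)*x⌋ : ℝ)) = (k:ℝ)^(N+1)*x)
    (hd : digit k N x = 1) : x ∈ Ck k := by
  have hk0 : (0:ℝ) < (k:ℝ) := by
    have : 0 < k := by omega
    exact_mod_cast this
  have hfx : ⌊x⌋ = 0 := Int.floor_eq_zero_iff.mpr (by exact hx)
  set m : ℤ := ⌊(k:ℝ)^(N+1)*x⌋ with hmdef
  set a : ℕ → ℕ := fun n => if n < N then (digit k n x).toNat else if n = N then 0 else k - 1 with ha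
  refine ⟨a, fun n => ?_, ?_⟩
  · rw [ha]
    simp only []
    by_cases h1 : n < N
    · rw [if_pos h1]
      rcases hgood n h1 with h'|h'
      · left; omega
      · right; omega
    · rw [if_neg h1]
      by_cases h2 : n = N
      · rw [if_pos h2]; left; rfl
      · rw [if_neg h2]; right; rfl
  · -- HasSum computation
    set f₁ : ℕ → ℝ := fun n => if n < N then (digit k n x : ℝ)/(k:ℝ)^(n+1) else 0 with hf₁
    set f₂ : ℕ → ℝ := fun n => if N < n then ((k:ℝ)-1)/(k:ℝ)^(n+1) else 0 with hf₂
    have hs₁ : HasSum f₁ ((⌊(k:ℝ)^N * x⌋ : ℝ)/(k:ℝ)^N) := by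
      have h0 := hasSum_sum_of_ne_finset_zero (L := SummationFilter.unconditional ℕ) (s := Finset.range N) (f := f₁)
        (fun b hb => by rw [hf₁]; simp only []; rw [if_neg (by simpa using hb)])
      have : ∑ b ∈ Finset.range N, f₁ b = (⌊(k:ℝ)^N * x⌋ : ℝ)/(k:ℝ)^N := by
        rw [← sub_zero ((⌊(k:ℝ)^N * x⌋ : ℝ)/(k:ℝ)^N)]
        rw [show (0:ℝ) = ((⌊x⌋ : ℤ) : ℝ) by rw [hfx]; simp]
        rw [← sum_digits k hk x N]
        refine Finset.sum_congr rfl (fun n hn => ?_)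
        rw [hf₁]
        simp only []
        rw [if_pos (Finset.mem_range.mp hn)]
      rwa [this] at h0
    have hs₂ : HasSum f₂ (1/(k:ℝ)^(N+1)) := hasSum_tail k hk N
    have hsum := hs₁.add hs₂
    have hptw : (fun n => f₁ n + f₂ n) = fun n => (a n : ℝ)/(k:ℝ)^(n+1) := by
      funext n
      rw [hf₁, hf₂, ha]
      simp only []
      rcases lt_trichotomy n N with h1|h1|h1
      · rw [if_pos h1, if_neg (by omega), if_pos h1, add_zero]
        congr 1
        exact_mod_cast (congrArg (Int.cast : ℤ → ℝ) (Int.toNat_of_nonneg (digit_nonneg k hk n x))).symm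
      · rw [if_neg (by omega), if_neg (by omega), if_neg (by omega), if_pos h1]
        simp
      · rw [if_neg (by omega), if_pos h1, if_neg (by omega), if_neg (by omega), zero_add]
        congr 1
        have : (1:ℕ) ≤ k := by omega
        push_cast [Nat.cast_sub this]
        ring
    rw [hptw] at hsum
    have hval : (⌊(k:ℝ)^N * x⌋ : ℝ)/(k:ℝ)^N + 1/(k:ℝ)^(N+1) = x := by
      have hq : ⌊(k:ℝ)^N * x⌋ = m / (k:ℤ) := by
        have : (k:ℝ)^N * x = ((k:ℝ)^(N+1) * x) / (k:ℝ)^1 := by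
          rw [eq_div_iff (by positivity)]; ring
        rw [this, floor_div_pow k hk, pow_one]
      have hdm : (k:ℤ) * (m / (k:ℤ)) + 1 = m := by
        have h1 := Int.mul_ediv_add_emod m (k:ℤ)
        have h2 : m % (k:ℤ) = 1 := hd
        omega
      have hdmR : (k:ℝ) * ((m / (k:ℤ) : ℤ) : ℝ) + 1 = (m:ℝ) := by exact_mod_cast hdm
      have hxm : x = (m:ℝ)/(k:ℝ)^(N+1) := by
        rw [eq_div_iff (by positivity : ((k:ℝ)^(N+1)) ≠ 0)]
        linarith [hm]
      rw [hq, hxm, ← hdmR, pow_succ]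
      field_simp
    rw [hval] at hsum
    exact hsum.tsum_eq.symm

theorem stmt9 (k : ℕ) (hk : 3 ≤ k) (x : ℝ) (hx : x ∈ Set.Ico (0 : ℝ) 1)
    (hxC : x ∉ Ck k) :
    HasDerivAt (gk k) 0 x := by
  obtain ⟨hx0, hx1⟩ := hx
  have hk0 : (0:ℝ) < (k:ℝ) := by
    have : 0 < k := by omega
    exact_mod_cast this
  have hkZ : (3:ℤ) ≤ (k:ℤ) := by exact_mod_cast hk
  have hSne : Set.Nonempty {n : ℕ | ¬(digit k n x = 0 ∨ digit k n x = (k:ℤ)-1)} := by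
    by_contra h
    rw [Set.not_nonempty_iff_eq_empty] at h
    refine hxC (mem_Ck_all_good k hk x ⟨hx0, hx1⟩ (fun n => ?_))
    by_contra hn
    exact absurd (Set.eq_empty_iff_forall_notMem.mp h n) (fun hc => hc hn)
  set N := sInf {n : ℕ | ¬(digit k n x = 0 ∨ digit k n x = (k:ℤ)-1)} with hN
  have hNbad : ¬(digit k N x = 0 ∨ digit k N x = (k:ℤ)-1) := Nat.sInf_mem hSne
  have hNgood : ∀ n < N, digit k n x = 0 ∨ digit k n x = (k:ℤ)-1 := by
    intro n hn
    by_contra hc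
    exact absurd (Nat.sInf_le hc) (not_le.mpr hn)
  have hKpos : (0:ℝ) < (k:ℝ)^(N+1) := by positivity
  have key : ∃ ε > 0, ∀ y : ℝ, |y - x| < ε →
      ((∀ n < N, digit k n y = digit k n x) ∧
        ¬(digit k N y = 0 ∨ digit k N y = (k:ℤ)-1)) := by
    set m : ℤ := ⌊(k:ℝ)^(N+1)*x⌋ with hmdef
    by_cases hm : ((m:ℝ) = (k:ℝ)^(N+1)*x)
    · -- k^(N+1) x is an integer
      have hd : digit k N x = m % (k:ℤ) := by rw [digit]
      have hnn : 0 ≤ m % (k:ℤ) := Int.emod_nonneg _ (by omega)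
      have hlt : m % (k:ℤ) < (k:ℤ) := Int.emod_lt_of_pos _ (by omega)
      rw [not_or, hd] at hNbad
      have hd1 : m % (k:ℤ) ≠ 1 := by
        intro h1
        exact hxC (mem_Ck_terminating k hk x ⟨hx0, hx1⟩ N hNgood hm (by rw [hd, h1]))
      have h2 : 2 ≤ m % (k:ℤ) ∧ m % (k:ℤ) ≤ (k:ℤ) - 2 := by omega
      have hmK : ∀ j : ℕ, 1 ≤ j → m % (k:ℤ)^j ≠ 0 := by
        intro j hj h0
        have h3 : (k:ℤ) ∣ (k:ℤ)^j := dvd_pow_self _ (by omega)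
        have h4 : (k:ℤ) ∣ m := dvd_trans h3 (Int.dvd_of_emod_eq_zero h0)
        exact hNbad.1 (Int.emod_eq_zero_of_dvd h4)
      refine ⟨1/(k:ℝ)^(N+1), by positivity, fun y hy => ?_⟩
      have hfl : ⌊(k:ℝ)^(N+1)*y⌋ = m ∨ ⌊(k:ℝ)^(N+1)*y⌋ = m - 1 := by
        rw [abs_lt] at hy
        have einv : (k:ℝ)^(N+1) * (1/(k:ℝ)^(N+1)) = 1 := by field_simp
        have hb1 : (k:ℝ)^(N+1)*(y-x) < 1 := by
          have := mul_lt_mul_of_pos_left hy.2 hKpos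
          linarith [einv ▸ this]
        have hb2 : (-1:ℝ) < (k:ℝ)^(N+1)*(y-x) := by
          have h5 : -(1/(k:ℝ)^(N+1)) < y - x := by linarith [hy.1]
          have := mul_lt_mul_of_pos_left h5 hKpos
          have e2 : (k:ℝ)^(N+1) * (-(1/(k:ℝ)^(N+1))) = -1 := by field_simp
          linarith [e2 ▸ this]
        have h3 : ⌊(k:ℝ)^(N+1)*y⌋ < m + 1 := Int.floor_lt.mpr (by push_cast; nlinarith [hm])
        have h4 : m - 1 ≤ ⌊(k:ℝ)^(N+1)*y⌋ := Int.le_floor.mpr (by push_cast; nlinarith [hm])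
        omega
      constructor
      · intro n hn
        rw [digit_eq_of_le k hk (le_of_lt hn) y, digit_eq_of_le k hk (le_of_lt hn) x, ← hmdef]
        rcases hfl with h|h
        · rw [h]
        · rw [h, ediv_pred _ _ (by positivity) (hmK _ (by omega))]
      · rw [show digit k N y = ⌊(k:ℝ)^(N+1)*y⌋ % (k:ℤ) from rfl, not_or]
        rcases hfl with h|h
        · rw [h]; omega
        · rw [h, emod_pred m (k:ℤ) (by omega) (by omega)]; omega
    · -- non-integer case
      have hlow : (m:ℝ) < (k:ℝ)^(N+1)*x := lt_of_le_of_ne (Int.floor_le _) hm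
      have hup : (k:ℝ)^(N+1)*x < (m:ℝ) + 1 := Int.lt_floor_add_one _
      refine ⟨min (((k:ℝ)^(N+1)*x - m)/(k:ℝ)^(N+1)) (((m:ℝ)+1 - (k:ℝ)^(N+1)*x)/(k:ℝ)^(N+1)),
        lt_min (div_pos (by linarith) hKpos) (div_pos (by linarith) hKpos), fun y hy => ?_⟩
      have hya := abs_lt.mp (lt_of_lt_of_le hy (min_le_left _ _))
      have hyb := abs_lt.mp (lt_of_lt_of_le hy (min_le_right _ _))
      have hfl : ⌊(k:ℝ)^(N+1)*y⌋ = m := by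
        rw [Int.floor_eq_iff]
        have e1 : (k:ℝ)^(N+1) * (((m:ℝ)+1 - (k:ℝ)^(N+1)*x)/(k:ℝ)^(N+1))
            = (m:ℝ)+1 - (k:ℝ)^(N+1)*x := by field_simp
        have e2 : (k:ℝ)^(N+1) * (((k:ℝ)^(N+1)*x - m)/(k:ℝ)^(N+1))
            = (k:ℝ)^(N+1)*x - m := by field_simp
        have h1 : (k:ℝ)^(N+1)*(y-x) < (m:ℝ)+1 - (k:ℝ)^(N+1)*x := by
          rw [← e1]; exact mul_lt_mul_of_pos_left hyb.2 hKpos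
        have h2 : -((k:ℝ)^(N+1)*x - m) < (k:ℝ)^(N+1)*(y-x) := by
          rw [← e2]
          have := mul_lt_mul_of_pos_left hya.1 hKpos
          linarith [this]
        constructor
        · nlinarith
        · push_cast; nlinarith
      have hdig : ∀ n ≤ N, digit k n y = digit k n x := by
        intro n hn
        rw [digit_eq_of_le k hk hn y, digit_eq_of_le k hk hn x, hfl]
      exact ⟨fun n hn => hdig n (le_of_lt hn), by rw [hdig N le_rfl]; exact hNbad⟩
  obtain ⟨ε, hε, hkey⟩ := key
  have heq : gk k =ᶠ[nhds x] (fun _ => gk k x) := by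
    filter_upwards [Metric.ball_mem_nhds x (lt_min hε (by linarith : (0:ℝ) < 1 - x))] with y hy
    rw [Metric.mem_ball, Real.dist_eq] at hy
    have hy1 : y ≠ 1 := by
      have := (abs_lt.mp (lt_of_lt_of_le hy (min_le_right _ _))).2
      intro h; rw [h] at this; linarith
    obtain ⟨hdig, hbady⟩ := hkey y (lt_of_lt_of_le hy (min_le_left _ _))
    rw [gk_eval k y N hy1 (fun n hn => by rw [hdig n hn]; exact hNgood n hn) hbady,
        gk_eval k x N (ne_of_lt hx1) hNgood hNbad]
    congr 1
    exact Finset.sum_congr rfl (fun n hn => by rw [hdig n (Finset.mem_range.mp hn)])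
  exact (hasDerivAt_const x (gk k x)).congr_of_eventuallyEq heq
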